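/- The large tilt graph of a region (a connected board) is weakly connected: for any two pixels u, v of the region, there is an undirected path between u† and v† in the large tilt graph, where p† denotes the anchor of p. -/

import Mathlib

open Classical in
/-- The four tilt directions: right, left, up, down. -/
def dirs : Finset (ℤ × ℤ) := {(1, 0), (-1, 0), (0, 1), (0, -1)}

/-- `TiltEnd B p d q`: starting at pixel `p` of the board `B` and moving in
direction `d`, the particle comes to rest at `q`, i.e. `q = p^d` is the extreme
pixel of the maximal segment through `p` in direction `d`. -/
def TiltEnd (B : Finset (ℤ × ℤ)) (p d q : ℤ × ℤ) : Prop :=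
  (∃ n : ℕ, q = p + n • d ∧ ∀ m : ℕ, m ≤ n → p + m • d ∈ B) ∧ q + d ∉ B

/-- The full tilt graph of a board `B`: edges `(p, p^x)` for each direction. -/
def GF (B : Finset (ℤ × ℤ)) (p q : ℤ × ℤ) : Prop :=
  p ∈ B ∧ ∃ d ∈ dirs, TiltEnd B p d q

/-- `p` and `q` lie in a common (maximal horizontal) row segment of `B`. -/
def SameRow (B : Finset (ℤ × ℤ)) (p q : ℤ × ℤ) : Prop :=
  p ∈ B ∧ q ∈ B ∧ p.2 = q.2 ∧
    ∀ x : ℤ, min p.1 q.1 ≤ x → x ≤ max p.1 q.1 → (x, p.2) ∈ B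

/-- `p` and `q` lie in a common (maximal vertical) column segment of `B`. -/
def SameCol (B : Finset (ℤ × ℤ)) (p q : ℤ × ℤ) : Prop :=
  p ∈ B ∧ q ∈ B ∧ p.1 = q.1 ∧
    ∀ y : ℤ, min p.2 q.2 ≤ y → y ≤ max p.2 q.2 → (p.1, y) ∈ B

/-- `R` is an axis-aligned rectangle of pixels whose upper-right cell is `a`. -/
def IsRect (R : Set (ℤ × ℤ)) (a : ℤ × ℤ) : Prop :=
  ∃ x₁ y₁ : ℤ, x₁ ≤ a.1 ∧ y₁ ≤ a.2 ∧
    R = {v | x₁ ≤ v.1 ∧ v.1 ≤ a.1 ∧ y₁ ≤ v.2 ∧ v.2 ≤ a.2}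

/-- `a` is the anchor `p†` of `p`: `a` is the unique vertex of the large tilt
graph vertex set `VL` in a rectangle of pixels of `B` containing `p`, adjacent
on the inside to the rectangle's upper-right corner. -/
def IsAnchor (B : Finset (ℤ × ℤ)) (VL : Set (ℤ × ℤ)) (p a : ℤ × ℤ) : Prop :=
  a ∈ VL ∧ ∃ R : Set (ℤ × ℤ), IsRect R a ∧ R ⊆ ↑B ∧ p ∈ R ∧
    ∀ v ∈ R, v ∈ VL → v = a

/-- `VL` is a valid vertex set for the large tilt graph of board `B` with sinks
`S`: it consists of pixels, contains all sinks, is closed under tilt moves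
(so it contains the tilt images of sinks and the segment endpoints it needs),
and is closed under intersections of row and column segments through its
vertices. -/
structure LargeTiltSet (B : Finset (ℤ × ℤ)) (S VL : Set (ℤ × ℤ)) : Prop where
  subset : VL ⊆ ↑B
  sinks : S ⊆ VL
  tiltClosed : ∀ v ∈ VL, ∀ d ∈ dirs, ∀ q, TiltEnd B v d q → q ∈ VL
  interClosed : ∀ a ∈ VL, ∀ b ∈ VL, ∀ c, SameRow B a c → SameCol B b c → c ∈ VL

/-- The large tilt graph: the subgraph of the full tilt graph induced by `VL`. -/
def GLarge (B : Finset (ℤ × ℤ)) (VL : Set (ℤ × ℤ)) (p q : ℤ × ℤ) : Prop :=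
  p ∈ VL ∧ q ∈ VL ∧ GF B p q

/-- Symmetrization of an edge relation (for undirected paths). -/
def Symm {α : Type*} (E : α → α → Prop) : α → α → Prop := fun a b => E a b ∨ E b a

/-- Orthogonal adjacency of pixels of a board. -/
def Adj (B : Finset (ℤ × ℤ)) (p q : ℤ × ℤ) : Prop :=
  p ∈ B ∧ q ∈ B ∧ (q = p + (1, 0) ∨ q = p + (-1, 0) ∨ q = p + (0, 1) ∨ q = p + (0, -1))

lemma mem_dirs_right : ((1:ℤ),(0:ℤ)) ∈ dirs := by simp [dirs]
lemma mem_dirs_up : ((0:ℤ),(1:ℤ)) ∈ dirs := by simp [dirs]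

lemma hsmul (n : ℕ) : n • (((1:ℤ),(0:ℤ))) = ((n:ℤ), 0) := by
  simp [Prod.ext_iff]

lemma vsmul (n : ℕ) : n • (((0:ℤ),(1:ℤ))) = (0, (n:ℤ)) := by
  simp [Prod.ext_iff]

lemma tiltEnd_right_intro (B : Finset (ℤ × ℤ)) (p : ℤ × ℤ) (n : ℕ)
    (h1 : ∀ m : ℕ, m ≤ n → ((p.1 + (m:ℤ), p.2)) ∈ B)
    (h2 : ((p.1 + (n:ℤ) + 1, p.2)) ∉ B) :
    TiltEnd B p (1,0) (p.1 + (n:ℤ), p.2) := by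
  refine ⟨⟨n, ?_, fun m hm => ?_⟩, ?_⟩
  · rw [hsmul]; ext <;> simp
  · rw [hsmul]
    have := h1 m hm
    convert this using 2 <;> simp
  · convert h2 using 2
    simp

lemma tiltEnd_up_intro (B : Finset (ℤ × ℤ)) (p : ℤ × ℤ) (n : ℕ)
    (h1 : ∀ m : ℕ, m ≤ n → ((p.1, p.2 + (m:ℤ))) ∈ B)
    (h2 : ((p.1, p.2 + (n:ℤ) + 1)) ∉ B) :
    TiltEnd B p (0,1) (p.1, p.2 + (n:ℤ)) := by
  refine ⟨⟨n, ?_, fun m hm => ?_⟩, ?_⟩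
  · rw [vsmul]; ext <;> simp
  · rw [vsmul]
    have := h1 m hm
    convert this using 2 <;> simp
  · convert h2 using 2
    simp

lemma exists_right_stop (B : Finset (ℤ × ℤ)) (p : ℤ × ℤ) :
    ∃ k : ℕ, ((p.1 + (k:ℤ) + 1, p.2)) ∉ B := by
  by_contra h
  push_neg at h
  have hsub : Set.range (fun k : ℕ => ((p.1 + (k:ℤ) + 1, p.2))) ⊆ ↑B := by
    rintro _ ⟨k, rfl⟩; exact h k
  have hinj : Function.Injective (fun k : ℕ => ((p.1 + (k:ℤ) + 1, p.2))) := by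
    intro i j hij
    simp only [Prod.ext_iff] at hij
    omega
  exact Set.infinite_range_of_injective hinj (B.finite_toSet.subset hsub)

lemma exists_up_stop (B : Finset (ℤ × ℤ)) (p : ℤ × ℤ) :
    ∃ k : ℕ, ((p.1, p.2 + (k:ℤ) + 1)) ∉ B := by
  by_contra h
  push_neg at h
  have hsub : Set.range (fun k : ℕ => ((p.1, p.2 + (k:ℤ) + 1))) ⊆ ↑B := by
    rintro _ ⟨k, rfl⟩; exact h k
  have hinj : Function.Injective (fun k : ℕ => ((p.1, p.2 + (k:ℤ) + 1))) := by
    intro i j hij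
    simp only [Prod.ext_iff] at hij
    omega
  exact Set.infinite_range_of_injective hinj (B.finite_toSet.subset hsub)

open Classical in
lemma tilt_right_total (B : Finset (ℤ × ℤ)) (p : ℤ × ℤ) (hp : p ∈ B) :
    ∃ n : ℕ, (∀ m : ℕ, m ≤ n → ((p.1 + (m:ℤ), p.2)) ∈ B) ∧ ((p.1 + (n:ℤ) + 1, p.2)) ∉ B := by
  refine ⟨Nat.find (exists_right_stop B p), fun m hm => ?_, Nat.find_spec (exists_right_stop B p)⟩
  match m, hm with
  | 0, _ => simpa using hp
  | (k+1), hm =>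
    have hk : k < Nat.find (exists_right_stop B p) := by omega
    have := Nat.find_min (exists_right_stop B p) hk
    simp only [not_not] at this
    convert this using 2
    push_cast; ring

open Classical in
lemma tilt_up_total (B : Finset (ℤ × ℤ)) (p : ℤ × ℤ) (hp : p ∈ B) :
    ∃ n : ℕ, (∀ m : ℕ, m ≤ n → ((p.1, p.2 + (m:ℤ))) ∈ B) ∧ ((p.1, p.2 + (n:ℤ) + 1)) ∉ B := by
  refine ⟨Nat.find (exists_up_stop B p), fun m hm => ?_, Nat.find_spec (exists_up_stop B p)⟩
  match m, hm with
  | 0, _ => simpa using hp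
  | (k+1), hm =>
    have hk : k < Nat.find (exists_up_stop B p) := by omega
    have := Nat.find_min (exists_up_stop B p) hk
    simp only [not_not] at this
    convert this using 2
    push_cast; ring

lemma mem_rect' {x₁ y₁ X Y : ℤ} {w : ℤ × ℤ}
    (h1 : x₁ ≤ w.1) (h2 : w.1 ≤ X) (h3 : y₁ ≤ w.2) (h4 : w.2 ≤ Y) :
    w ∈ {v : ℤ × ℤ | x₁ ≤ v.1 ∧ v.1 ≤ X ∧ y₁ ≤ v.2 ∧ v.2 ≤ Y} := ⟨h1, h2, h3, h4⟩

lemma key_right (B : Finset (ℤ × ℤ)) (VL : Set (ℤ × ℤ))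
    (hsub : VL ⊆ ↑B)
    (htilt : ∀ v ∈ VL, ∀ d ∈ dirs, ∀ q, TiltEnd B v d q → q ∈ VL)
    (hinter : ∀ a ∈ VL, ∀ b ∈ VL, ∀ c, SameRow B a c → SameCol B b c → c ∈ VL)
    (p q a b : ℤ × ℤ) (hq : q = p + (1,0)) (hp : p ∈ B)
    (ha : IsAnchor B VL p a) (hb : IsAnchor B VL q b)
    (hup : ∀ c, IsAnchor B VL p c → c = a)
    (huq : ∀ c, IsAnchor B VL q c → c = b) :
    Relation.ReflTransGen (Symm (GLarge B VL)) a b := by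
  obtain ⟨haVL, R, ⟨x₁, y₁, hx₁, hy₁, hR⟩, hRB, hpR, hRu⟩ := ha
  obtain ⟨hbVL, R', ⟨x₂, y₂, hx₂, hy₂, hR'⟩, hR'B, hqR', hR'u⟩ := hb
  subst hR hR'
  have haB : a ∈ B := Finset.mem_coe.mp (hsub haVL)
  have hbB : b ∈ B := Finset.mem_coe.mp (hsub hbVL)
  have hq1 : q.1 = p.1 + 1 := by simp [hq]
  have hq2 : q.2 = p.2 := by simp [hq]
  obtain ⟨hp1, hp2, hp3, hp4⟩ := hpR
  obtain ⟨hq'1, hq'2, hq'3, hq'4⟩ := hqR'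
  rcases lt_or_eq_of_le hp2 with hlt | heq
  · -- q is in the rectangle of a, so a anchors q as well
    have hqa : IsAnchor B VL q a :=
      ⟨haVL, _, ⟨x₁, y₁, hx₁, hy₁, rfl⟩, hRB,
        mem_rect' (by omega) (by omega) (by omega) (by omega), hRu⟩
    exact (huq a hqa) ▸ Relation.ReflTransGen.refl
  · rcases lt_or_eq_of_le hq'1 with hlt2 | heq2
    · -- p is in the rectangle of b, so b anchors p as well
      have hpb : IsAnchor B VL p b :=
        ⟨hbVL, _, ⟨x₂, y₂, hx₂, hy₂, rfl⟩, hR'B,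
          mem_rect' (by omega) (by omega) (by omega) (by omega), hR'u⟩
      exact (hup b hpb).symm ▸ Relation.ReflTransGen.refl
    · -- hard case: p.1 = a.1, x₂ = q.1 = a.1 + 1
      -- Step A: a.2 ≤ b.2
      have hab2 : a.2 ≤ b.2 := by
        by_contra hcon
        push_neg at hcon
        have hcR : ((a.1, b.2) : ℤ × ℤ) ∈
            {v : ℤ × ℤ | x₁ ≤ v.1 ∧ v.1 ≤ a.1 ∧ y₁ ≤ v.2 ∧ v.2 ≤ a.2} :=
          mem_rect' (show x₁ ≤ a.1 by omega) (show a.1 ≤ a.1 by omega)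
            (show y₁ ≤ b.2 by omega) (show b.2 ≤ a.2 by omega)
        have hcB : ((a.1, b.2) : ℤ × ℤ) ∈ B := Finset.mem_coe.mp (hRB hcR)
        have hrow : SameRow B b (a.1, b.2) := by
          refine ⟨hbB, hcB, rfl, fun x hxl hxr => ?_⟩
          have hxl' : min b.1 a.1 ≤ x := hxl
          have hxr' : x ≤ max b.1 a.1 := hxr
          rcases eq_or_lt_of_le (show a.1 ≤ x by omega) with h | h
          · exact h ▸ hcB
          · exact Finset.mem_coe.mp (hR'B (mem_rect' (show x₂ ≤ x by omega)
              (show x ≤ b.1 by omega) (show y₂ ≤ b.2 by omega) (show b.2 ≤ b.2 by omega)))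
        have hcol : SameCol B a (a.1, b.2) := by
          refine ⟨haB, hcB, rfl, fun y hyl hyr => ?_⟩
          have hyl' : min a.2 b.2 ≤ y := hyl
          have hyr' : y ≤ max a.2 b.2 := hyr
          exact Finset.mem_coe.mp (hRB (mem_rect' (show x₁ ≤ a.1 by omega)
            (show a.1 ≤ a.1 by omega) (show y₁ ≤ y by omega) (show y ≤ a.2 by omega)))
        have hcVL : ((a.1, b.2) : ℤ × ℤ) ∈ VL := hinter b hbVL a haVL _ hrow hcol
        have := hRu _ hcR hcVL
        have hb2' : b.2 = a.2 := by
          have h2 := congrArg Prod.snd this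
          simpa using h2
        omega
      -- Step B: tilt a to the right
      obtain ⟨n, hpre, hstop⟩ := tilt_right_total B a haB
      have htw : TiltEnd B a (1,0) (a.1 + (n:ℤ), a.2) := tiltEnd_right_intro B a n hpre hstop
      have hwVL : ((a.1 + (n:ℤ), a.2) : ℤ × ℤ) ∈ VL :=
        htilt a haVL (1,0) mem_dirs_right _ htw
      have e1 : GLarge B VL a (a.1 + (n:ℤ), a.2) :=
        ⟨haVL, hwVL, haB, (1,0), mem_dirs_right, htw⟩
      have hn1 : 1 ≤ n := by
        rcases Nat.eq_zero_or_pos n with h0 | h1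
        · exfalso
          subst h0
          have hmem : ((a.1 + 1, a.2) : ℤ × ℤ) ∈ B :=
            Finset.mem_coe.mp (hR'B (mem_rect' (show x₂ ≤ a.1 + 1 by omega)
              (show a.1 + 1 ≤ b.1 by omega) (show y₂ ≤ a.2 by omega) (show a.2 ≤ b.2 by omega)))
          have : ((a.1 + ((0:ℕ):ℤ) + 1, a.2) : ℤ × ℤ) = (a.1 + 1, a.2) := by
            simp
          rw [this] at hstop
          exact hstop hmem
        · exact h1
      have hseg : ∀ x : ℤ, a.1 ≤ x → x ≤ a.1 + (n:ℤ) → ((x, a.2) : ℤ × ℤ) ∈ B := by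
        intro x h1 h2
        have hmem := hpre (x - a.1).toNat (by omega)
        have hx' : a.1 + (((x - a.1).toNat : ℕ) : ℤ) = x := by omega
        exact hx' ▸ hmem
      rcases le_or_gt (a.1 + (n:ℤ)) b.1 with hle | hgt
      · -- endpoint of tilt lies in rectangle of b, hence equals b
        have hwR' : ((a.1 + (n:ℤ), a.2) : ℤ × ℤ) ∈
            {v : ℤ × ℤ | x₂ ≤ v.1 ∧ v.1 ≤ b.1 ∧ y₂ ≤ v.2 ∧ v.2 ≤ b.2} :=
          mem_rect' (show x₂ ≤ a.1 + (n:ℤ) by omega) (show a.1 + (n:ℤ) ≤ b.1 by omega)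
            (show y₂ ≤ a.2 by omega) (show a.2 ≤ b.2 by omega)
        have hwb : ((a.1 + (n:ℤ), a.2) : ℤ × ℤ) = b := hR'u _ hwR' hwVL
        exact hwb ▸ Relation.ReflTransGen.single (Or.inl e1)
      · -- b is on the tilt row; b tilts right to the same endpoint
        have hcB : ((b.1, a.2) : ℤ × ℤ) ∈ B := hseg b.1 (by omega) (by omega)
        have hwB : ((a.1 + (n:ℤ), a.2) : ℤ × ℤ) ∈ B := hseg _ (by omega) (by omega)
        have hrow : SameRow B (a.1 + (n:ℤ), a.2) (b.1, a.2) := by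
          refine ⟨hwB, hcB, rfl, fun x hxl hxr => ?_⟩
          have hxl' : min (a.1 + (n:ℤ)) b.1 ≤ x := hxl
          have hxr' : x ≤ max (a.1 + (n:ℤ)) b.1 := hxr
          exact hseg x (by omega) (by omega)
        have hcol : SameCol B b (b.1, a.2) := by
          refine ⟨hbB, hcB, rfl, fun y hyl hyr => ?_⟩
          have hyl' : min b.2 a.2 ≤ y := hyl
          have hyr' : y ≤ max b.2 a.2 := hyr
          exact Finset.mem_coe.mp (hR'B (mem_rect' (show x₂ ≤ b.1 by omega)
            (show b.1 ≤ b.1 by omega) (show y₂ ≤ y by omega) (show y ≤ b.2 by omega)))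
        have hcVL : ((b.1, a.2) : ℤ × ℤ) ∈ VL := hinter _ hwVL b hbVL _ hrow hcol
        have hcR' : ((b.1, a.2) : ℤ × ℤ) ∈
            {v : ℤ × ℤ | x₂ ≤ v.1 ∧ v.1 ≤ b.1 ∧ y₂ ≤ v.2 ∧ v.2 ≤ b.2} :=
          mem_rect' (show x₂ ≤ b.1 by omega) (show b.1 ≤ b.1 by omega)
            (show y₂ ≤ a.2 by omega) (show a.2 ≤ b.2 by omega)
        have hcb : ((b.1, a.2) : ℤ × ℤ) = b := hR'u _ hcR' hcVL
        have hb2 : a.2 = b.2 := by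
          have h2 := congrArg Prod.snd hcb
          simpa using h2
        have hpre' : ∀ m : ℕ, m ≤ (a.1 + (n:ℤ) - b.1).toNat →
            ((b.1 + (m:ℤ), b.2) : ℤ × ℤ) ∈ B := by
          intro m hm
          have hmn : (m:ℤ) ≤ a.1 + (n:ℤ) - b.1 := by omega
          have := hseg (b.1 + (m:ℤ)) (by omega) (by omega)
          exact hb2 ▸ this
        have hstop' : ((b.1 + (((a.1 + (n:ℤ) - b.1).toNat : ℕ) : ℤ) + 1, b.2) : ℤ × ℤ) ∉ B := by
          have h' : b.1 + (((a.1 + (n:ℤ) - b.1).toNat : ℕ) : ℤ) + 1 = a.1 + (n:ℤ) + 1 := by omega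
          rw [h', ← hb2]
          exact hstop
        have htw' := tiltEnd_right_intro B b (a.1 + (n:ℤ) - b.1).toNat hpre' hstop'
        have hend : ((b.1 + (((a.1 + (n:ℤ) - b.1).toNat : ℕ) : ℤ), b.2) : ℤ × ℤ) =
            (a.1 + (n:ℤ), a.2) := by
          simp only [Prod.ext_iff]
          constructor <;> omega
        rw [hend] at htw'
        have e2 : GLarge B VL b (a.1 + (n:ℤ), a.2) :=
          ⟨hbVL, hwVL, hbB, (1,0), mem_dirs_right, htw'⟩
        exact Relation.ReflTransGen.tail (Relation.ReflTransGen.single (Or.inl e1)) (Or.inr e2)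

lemma key_up (B : Finset (ℤ × ℤ)) (VL : Set (ℤ × ℤ))
    (hsub : VL ⊆ ↑B)
    (htilt : ∀ v ∈ VL, ∀ d ∈ dirs, ∀ q, TiltEnd B v d q → q ∈ VL)
    (hinter : ∀ a ∈ VL, ∀ b ∈ VL, ∀ c, SameRow B a c → SameCol B b c → c ∈ VL)
    (p q a b : ℤ × ℤ) (hq : q = p + (0,1)) (hp : p ∈ B)
    (ha : IsAnchor B VL p a) (hb : IsAnchor B VL q b)
    (hup : ∀ c, IsAnchor B VL p c → c = a)
    (huq : ∀ c, IsAnchor B VL q c → c = b) :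
    Relation.ReflTransGen (Symm (GLarge B VL)) a b := by
  obtain ⟨haVL, R, ⟨x₁, y₁, hx₁, hy₁, hR⟩, hRB, hpR, hRu⟩ := ha
  obtain ⟨hbVL, R', ⟨x₂, y₂, hx₂, hy₂, hR'⟩, hR'B, hqR', hR'u⟩ := hb
  subst hR hR'
  have haB : a ∈ B := Finset.mem_coe.mp (hsub haVL)
  have hbB : b ∈ B := Finset.mem_coe.mp (hsub hbVL)
  have hq1 : q.1 = p.1 := by simp [hq]
  have hq2 : q.2 = p.2 + 1 := by simp [hq]
  obtain ⟨hp1, hp2, hp3, hp4⟩ := hpR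
  obtain ⟨hq'1, hq'2, hq'3, hq'4⟩ := hqR'
  rcases lt_or_eq_of_le hp4 with hlt | heq
  · -- q is in the rectangle of a, so a anchors q as well
    have hqa : IsAnchor B VL q a :=
      ⟨haVL, _, ⟨x₁, y₁, hx₁, hy₁, rfl⟩, hRB,
        mem_rect' (by omega) (by omega) (by omega) (by omega), hRu⟩
    exact (huq a hqa) ▸ Relation.ReflTransGen.refl
  · rcases lt_or_eq_of_le hq'3 with hlt2 | heq2
    · -- p is in the rectangle of b, so b anchors p as well
      have hpb : IsAnchor B VL p b :=
        ⟨hbVL, _, ⟨x₂, y₂, hx₂, hy₂, rfl⟩, hR'B,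
          mem_rect' (by omega) (by omega) (by omega) (by omega), hR'u⟩
      exact (hup b hpb).symm ▸ Relation.ReflTransGen.refl
    · -- hard case: p.2 = a.2, y₂ = q.2 = a.2 + 1
      -- Step A: a.1 ≤ b.1
      have hab1 : a.1 ≤ b.1 := by
        by_contra hcon
        push_neg at hcon
        have hcR : ((b.1, a.2) : ℤ × ℤ) ∈
            {v : ℤ × ℤ | x₁ ≤ v.1 ∧ v.1 ≤ a.1 ∧ y₁ ≤ v.2 ∧ v.2 ≤ a.2} :=
          mem_rect' (show x₁ ≤ b.1 by omega) (show b.1 ≤ a.1 by omega)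
            (show y₁ ≤ a.2 by omega) (show a.2 ≤ a.2 by omega)
        have hcB : ((b.1, a.2) : ℤ × ℤ) ∈ B := Finset.mem_coe.mp (hRB hcR)
        have hcol : SameCol B b (b.1, a.2) := by
          refine ⟨hbB, hcB, rfl, fun y hyl hyr => ?_⟩
          have hyl' : min b.2 a.2 ≤ y := hyl
          have hyr' : y ≤ max b.2 a.2 := hyr
          rcases eq_or_lt_of_le (show a.2 ≤ y by omega) with h | h
          · exact h ▸ hcB
          · exact Finset.mem_coe.mp (hR'B (mem_rect' (show x₂ ≤ b.1 by omega)
              (show b.1 ≤ b.1 by omega) (show y₂ ≤ y by omega) (show y ≤ b.2 by omega)))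
        have hrow : SameRow B a (b.1, a.2) := by
          refine ⟨haB, hcB, rfl, fun x hxl hxr => ?_⟩
          have hxl' : min a.1 b.1 ≤ x := hxl
          have hxr' : x ≤ max a.1 b.1 := hxr
          exact Finset.mem_coe.mp (hRB (mem_rect' (show x₁ ≤ x by omega)
            (show x ≤ a.1 by omega) (show y₁ ≤ a.2 by omega) (show a.2 ≤ a.2 by omega)))
        have hcVL : ((b.1, a.2) : ℤ × ℤ) ∈ VL := hinter a haVL b hbVL _ hrow hcol
        have := hRu _ hcR hcVL
        have hb1' : b.1 = a.1 := by
          have h1 := congrArg Prod.fst this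
          simpa using h1
        omega
      -- Step B: tilt a upwards
      obtain ⟨n, hpre, hstop⟩ := tilt_up_total B a haB
      have htw : TiltEnd B a (0,1) (a.1, a.2 + (n:ℤ)) := tiltEnd_up_intro B a n hpre hstop
      have hwVL : ((a.1, a.2 + (n:ℤ)) : ℤ × ℤ) ∈ VL :=
        htilt a haVL (0,1) mem_dirs_up _ htw
      have e1 : GLarge B VL a (a.1, a.2 + (n:ℤ)) :=
        ⟨haVL, hwVL, haB, (0,1), mem_dirs_up, htw⟩
      have hn1 : 1 ≤ n := by
        rcases Nat.eq_zero_or_pos n with h0 | h1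
        · exfalso
          subst h0
          have hmem : ((a.1, a.2 + 1) : ℤ × ℤ) ∈ B :=
            Finset.mem_coe.mp (hR'B (mem_rect' (show x₂ ≤ a.1 by omega)
              (show a.1 ≤ b.1 by omega) (show y₂ ≤ a.2 + 1 by omega) (show a.2 + 1 ≤ b.2 by omega)))
          have : ((a.1, a.2 + ((0:ℕ):ℤ) + 1) : ℤ × ℤ) = (a.1, a.2 + 1) := by
            simp
          rw [this] at hstop
          exact hstop hmem
        · exact h1
      have hseg : ∀ y : ℤ, a.2 ≤ y → y ≤ a.2 + (n:ℤ) → ((a.1, y) : ℤ × ℤ) ∈ B := by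
        intro y h1 h2
        have hmem := hpre (y - a.2).toNat (by omega)
        have hy' : a.2 + (((y - a.2).toNat : ℕ) : ℤ) = y := by omega
        exact hy' ▸ hmem
      rcases le_or_gt (a.2 + (n:ℤ)) b.2 with hle | hgt
      · -- endpoint of tilt lies in rectangle of b, hence equals b
        have hwR' : ((a.1, a.2 + (n:ℤ)) : ℤ × ℤ) ∈
            {v : ℤ × ℤ | x₂ ≤ v.1 ∧ v.1 ≤ b.1 ∧ y₂ ≤ v.2 ∧ v.2 ≤ b.2} :=
          mem_rect' (show x₂ ≤ a.1 by omega) (show a.1 ≤ b.1 by omega)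
            (show y₂ ≤ a.2 + (n:ℤ) by omega) (show a.2 + (n:ℤ) ≤ b.2 by omega)
        have hwb : ((a.1, a.2 + (n:ℤ)) : ℤ × ℤ) = b := hR'u _ hwR' hwVL
        exact hwb ▸ Relation.ReflTransGen.single (Or.inl e1)
      · -- b is on the tilt column; b tilts up to the same endpoint
        have hcB : ((a.1, b.2) : ℤ × ℤ) ∈ B := hseg b.2 (by omega) (by omega)
        have hwB : ((a.1, a.2 + (n:ℤ)) : ℤ × ℤ) ∈ B := hseg _ (by omega) (by omega)
        have hcol : SameCol B (a.1, a.2 + (n:ℤ)) (a.1, b.2) := by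
          refine ⟨hwB, hcB, rfl, fun y hyl hyr => ?_⟩
          have hyl' : min (a.2 + (n:ℤ)) b.2 ≤ y := hyl
          have hyr' : y ≤ max (a.2 + (n:ℤ)) b.2 := hyr
          exact hseg y (by omega) (by omega)
        have hrow : SameRow B b (a.1, b.2) := by
          refine ⟨hbB, hcB, rfl, fun x hxl hxr => ?_⟩
          have hxl' : min b.1 a.1 ≤ x := hxl
          have hxr' : x ≤ max b.1 a.1 := hxr
          exact Finset.mem_coe.mp (hR'B (mem_rect' (show x₂ ≤ x by omega)
            (show x ≤ b.1 by omega) (show y₂ ≤ b.2 by omega) (show b.2 ≤ b.2 by omega)))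
        have hcVL : ((a.1, b.2) : ℤ × ℤ) ∈ VL := hinter b hbVL _ hwVL _ hrow hcol
        have hcR' : ((a.1, b.2) : ℤ × ℤ) ∈
            {v : ℤ × ℤ | x₂ ≤ v.1 ∧ v.1 ≤ b.1 ∧ y₂ ≤ v.2 ∧ v.2 ≤ b.2} :=
          mem_rect' (show x₂ ≤ a.1 by omega) (show a.1 ≤ b.1 by omega)
            (show y₂ ≤ b.2 by omega) (show b.2 ≤ b.2 by omega)
        have hcb : ((a.1, b.2) : ℤ × ℤ) = b := hR'u _ hcR' hcVL
        have hb1 : a.1 = b.1 := by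
          have h1 := congrArg Prod.fst hcb
          simpa using h1
        have hpre' : ∀ m : ℕ, m ≤ (a.2 + (n:ℤ) - b.2).toNat →
            ((b.1, b.2 + (m:ℤ)) : ℤ × ℤ) ∈ B := by
          intro m hm
          have hmn : (m:ℤ) ≤ a.2 + (n:ℤ) - b.2 := by omega
          have := hseg (b.2 + (m:ℤ)) (by omega) (by omega)
          exact hb1 ▸ this
        have hstop' : ((b.1, b.2 + (((a.2 + (n:ℤ) - b.2).toNat : ℕ) : ℤ) + 1) : ℤ × ℤ) ∉ B := by
          have h' : b.2 + (((a.2 + (n:ℤ) - b.2).toNat : ℕ) : ℤ) + 1 = a.2 + (n:ℤ) + 1 := by omega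
          rw [h', ← hb1]
          exact hstop
        have htw' := tiltEnd_up_intro B b (a.2 + (n:ℤ) - b.2).toNat hpre' hstop'
        have hend : ((b.1, b.2 + (((a.2 + (n:ℤ) - b.2).toNat : ℕ) : ℤ)) : ℤ × ℤ) =
            (a.1, a.2 + (n:ℤ)) := by
          simp only [Prod.ext_iff]
          constructor <;> omega
        rw [hend] at htw'
        have e2 : GLarge B VL b (a.1, a.2 + (n:ℤ)) :=
          ⟨hbVL, hwVL, hbB, (0,1), mem_dirs_up, htw'⟩
        exact Relation.ReflTransGen.tail (Relation.ReflTransGen.single (Or.inl e1)) (Or.inr e2)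

/-- The large tilt graph of a region (connected board) is weakly connected:
any two anchors are joined by an undirected path in the large tilt graph. -/
theorem stmt7 (B : Finset (ℤ × ℤ)) (S VL : Set (ℤ × ℤ))
    (hVL : LargeTiltSet B S VL)
    (A : ℤ × ℤ → ℤ × ℤ)
    (hA : ∀ p ∈ B, IsAnchor B VL p (A p))
    (hAuniq : ∀ p ∈ B, ∀ a₁ a₂, IsAnchor B VL p a₁ → IsAnchor B VL p a₂ → a₁ = a₂)
    (hconn : ∀ p ∈ B, ∀ q ∈ B, Relation.ReflTransGen (Adj B) p q)
    (u : ℤ × ℤ) (hu : u ∈ B) (v : ℤ × ℤ) (hv : v ∈ B) :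
    Relation.ReflTransGen (Symm (GLarge B VL)) (A u) (A v) := by
  have hsymm : Symmetric (Symm (GLarge B VL)) := fun x y h => Or.symm h
  have main : ∀ p r : ℤ × ℤ, Adj B p r →
      Relation.ReflTransGen (Symm (GLarge B VL)) (A p) (A r) := by
    intro p r hadj
    obtain ⟨hpB, hrB, hcase⟩ := hadj
    have hup : ∀ c, IsAnchor B VL p c → c = A p :=
      fun c hc => hAuniq p hpB c (A p) hc (hA p hpB)
    have hur : ∀ c, IsAnchor B VL r c → c = A r :=
      fun c hc => hAuniq r hrB c (A r) hc (hA r hrB)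
    rcases hcase with h | h | h | h
    · exact key_right B VL hVL.subset hVL.tiltClosed hVL.interClosed p r (A p) (A r)
        h hpB (hA p hpB) (hA r hrB) hup hur
    · have h' : p = r + (1,0) := by
        rw [h]; simp [Prod.ext_iff]
      exact (haveI : Std.Symm (Symm (GLarge B VL)) := ⟨fun _ _ h => hsymm h⟩; Relation.ReflTransGen.symmetric.symm _ _)
        (key_right B VL hVL.subset hVL.tiltClosed hVL.interClosed r p (A r) (A p)
          h' hrB (hA r hrB) (hA p hpB) hur hup)
    · exact key_up B VL hVL.subset hVL.tiltClosed hVL.interClosed p r (A p) (A r)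
        h hpB (hA p hpB) (hA r hrB) hup hur
    · have h' : p = r + (0,1) := by
        rw [h]; simp [Prod.ext_iff]
      exact (haveI : Std.Symm (Symm (GLarge B VL)) := ⟨fun _ _ h => hsymm h⟩; Relation.ReflTransGen.symmetric.symm _ _)
        (key_up B VL hVL.subset hVL.tiltClosed hVL.interClosed r p (A r) (A p)
          h' hrB (hA r hrB) (hA p hpB) hur hup)
  have hpath := hconn u hu v hv
  clear hv
  induction hpath with
  | refl => exact Relation.ReflTransGen.refl
  | tail hstep hadj ih => exact ih.trans (main _ _ hadj)
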